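/- Let ω ≥ 0, μ > 0, τ > 0 with μτ < 1/e, let Ψ(t) = dexp(-μt; -μτ) with density ψ(t) = μ dexp(-μ(t-τ); -μτ), and let q : [0,∞) → ℝ be continuous. Define ρ(t) = ∫_0^t q(t₀) e^{-ω(t-t₀)} Ψ(t-t₀) dt₀, extended by ρ(t) = 0 for t < 0. Then ρ satisfies the delay differential equation ρ'(t) = q(t) - ω ρ(t) - μ e^{-ωτ} ρ(t - τ) for t > 0 (away from points of non-differentiability). -/

import Mathlib

open Real Set intervalIntegral
open MeasureTheory

noncomputable def dexp (μ τ t : ℝ) : ℝ :=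
  ∑' n : ℕ, (-μ) ^ n * (t - n * τ) ^ n / (Nat.factorial n) * (if (n : ℝ) * τ ≤ t then 1 else 0)

noncomputable def dterm (μ τ : ℝ) (n : ℕ) (u : ℝ) : ℝ :=
  (-μ) ^ n * (u - n * τ) ^ n / (Nat.factorial n) * (if (n : ℝ) * τ ≤ u then 1 else 0)

lemma dexp_eq_sum {μ τ : ℝ} (hτ : 0 < τ) (N : ℕ) (u : ℝ) (hu : u < N * τ) :
    dexp μ τ u = ∑ n ∈ Finset.range N, dterm μ τ n u := by
  unfold dexp dterm
  apply tsum_eq_sum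
  intro n hn
  have hN : (N : ℝ) ≤ n := by
    exact_mod_cast Nat.le_of_not_lt (fun h => hn (Finset.mem_range.2 h))
  have : ¬ ((n : ℝ) * τ ≤ u) := by
    push_neg
    calc u < N * τ := hu
    _ ≤ n * τ := by nlinarith
  simp [this]

lemma dexp_neg {μ τ : ℝ} (hτ : 0 < τ) {u : ℝ} (hu : u < 0) : dexp μ τ u = 0 := by
  simpa using dexp_eq_sum (μ := μ) hτ 0 u (by simpa using hu)

lemma dterm_measurable (μ τ : ℝ) (n : ℕ) : Measurable (dterm μ τ n) := by
  unfold dterm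
  exact (((measurable_id.sub_const _).pow_const _).const_mul _).div_const _ |>.mul
    (Measurable.ite (measurableSet_Ici) measurable_const measurable_const)

lemma measurable_dexp (μ τ : ℝ) (hτ : 0 < τ) : Measurable (dexp μ τ) := by
  apply measurable_of_tendsto_metrizable' (f := fun N u => ∑ n ∈ Finset.range N, dterm μ τ n u)
    (Filter.atTop) (fun N => Finset.measurable_sum _ fun n _ => dterm_measurable μ τ n)
  rw [tendsto_pi_nhds]
  intro u
  obtain ⟨N₀, hN₀⟩ := exists_nat_gt (u / τ)
  apply tendsto_nhds_of_eventually_eq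
  filter_upwards [Filter.eventually_ge_atTop N₀] with N hN
  exact (dexp_eq_sum hτ N u (by
    have : (N₀ : ℝ) ≤ N := by exact_mod_cast hN
    have h2 := (div_lt_iff₀ hτ).1 (hN₀.trans_le this)
    linarith)).symm

lemma dterm_abs_le {μ τ : ℝ} (hμ : 0 ≤ μ) (hτ : 0 < τ) (n : ℕ) {u R : ℝ} (hu : u ≤ R) :
    |dterm μ τ n u| ≤ (μ * max R 0) ^ n / (Nat.factorial n) := by
  unfold dterm
  by_cases h : (n : ℝ) * τ ≤ u
  · have h0 : (0:ℝ) ≤ (n : ℝ) * τ := by positivity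
    have h1 : 0 ≤ u - n * τ := by linarith
    have h2 : u - n * τ ≤ max R 0 := by
      have : u ≤ max R 0 := le_trans hu (le_max_left _ _)
      linarith
    rw [if_pos h, mul_one, abs_div, abs_mul, abs_pow, abs_pow, abs_neg, abs_of_nonneg hμ,
      abs_of_nonneg h1, abs_of_nonneg (Nat.cast_nonneg _), mul_pow]
    gcongr
  · rw [if_neg h, mul_zero, abs_zero]
    positivity

lemma dexp_abs_le {μ τ : ℝ} (hμ : 0 ≤ μ) (hτ : 0 < τ) (R : ℝ) :
    ∃ C : ℝ, 0 ≤ C ∧ ∀ u ≤ R, |dexp μ τ u| ≤ C := by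
  obtain ⟨N₀, hN₀⟩ := exists_nat_gt (R / τ)
  have hR : R < N₀ * τ := by
    have := (div_lt_iff₀ hτ).1 hN₀; linarith
  refine ⟨∑ n ∈ Finset.range N₀, (μ * max R 0) ^ n / (Nat.factorial n), ?_, ?_⟩
  · apply Finset.sum_nonneg; intro n _
    have : (0:ℝ) ≤ μ * max R 0 := by positivity
    positivity
  · intro u hu
    rw [dexp_eq_sum hτ N₀ u (lt_of_le_of_lt hu hR)]
    refine le_trans (Finset.abs_sum_le_sum_abs _ _) ?_
    exact Finset.sum_le_sum fun n _ => dterm_abs_le hμ hτ n hu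

lemma dterm_intervalIntegrable {μ τ : ℝ} (hμ : 0 ≤ μ) (hτ : 0 < τ) (n : ℕ) (a b : ℝ) :
    IntervalIntegrable (dterm μ τ n) volume a b := by
  rw [intervalIntegrable_iff]
  refine Integrable.mono' (g := fun _ => (μ * max (max a b) 0) ^ n / (Nat.factorial n))
    (integrableOn_const measure_Ioc_lt_top.ne)
    ((dterm_measurable μ τ n).aestronglyMeasurable.restrict) ?_
  rw [ae_restrict_iff' measurableSet_uIoc]
  filter_upwards with u hu
  exact dterm_abs_le hμ hτ n hu.2

lemma dexp_intervalIntegrable {μ τ : ℝ} (hμ : 0 ≤ μ) (hτ : 0 < τ) (a b : ℝ) :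
    IntervalIntegrable (dexp μ τ) volume a b := by
  rw [intervalIntegrable_iff]
  obtain ⟨C, _, hC⟩ := dexp_abs_le hμ hτ (max a b)
  refine Integrable.mono' (g := fun _ => C) (integrableOn_const measure_Ioc_lt_top.ne)
    ((measurable_dexp μ τ hτ).aestronglyMeasurable.restrict) ?_
  rw [ae_restrict_iff' measurableSet_uIoc]
  filter_upwards with u hu
  exact hC u hu.2

lemma integral_dterm_succ {μ τ : ℝ} (hμ : 0 ≤ μ) (hτ : 0 < τ) (n : ℕ) {u : ℝ} (hu : 0 ≤ u) :
    dterm μ τ (n+1) u = -μ * ∫ s in (0:ℝ)..(u - τ), dterm μ τ n s := by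
  by_cases hc : ((n:ℝ)+1) * τ ≤ u
  · -- active case
    have hnτ : (0:ℝ) ≤ (n:ℝ) * τ := by positivity
    have hnu : (n:ℝ) * τ ≤ u - τ := by nlinarith
    have hsplit : ∫ s in (0:ℝ)..(u - τ), dterm μ τ n s
        = (∫ s in (0:ℝ)..((n:ℝ)*τ), dterm μ τ n s) + ∫ s in ((n:ℝ)*τ)..(u-τ), dterm μ τ n s :=
      (integral_add_adjacent_intervals (dterm_intervalIntegrable hμ hτ n _ _)
        (dterm_intervalIntegrable hμ hτ n _ _)).symm
    have h1 : (∫ s in (0:ℝ)..((n:ℝ)*τ), dterm μ τ n s) = 0 := by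
      rw [integral_of_le hnτ, integral_Ioc_eq_integral_Ioo]
      rw [setIntegral_congr_fun measurableSet_Ioo (g := fun _ => (0:ℝ))
        (fun s hs => by simp [dterm, not_le.2 hs.2])]
      simp
    have h2 : (∫ s in ((n:ℝ)*τ)..(u-τ), dterm μ τ n s)
        = (-μ)^n / (Nat.factorial n) * ((u - τ - n*τ)^(n+1) / (n+1)) := by
      rw [integral_congr (g := fun s => (-μ)^n / (Nat.factorial n) * (s - (n:ℝ)*τ)^n)
        (fun s hs => ?_)]
      · rw [intervalIntegral.integral_const_mul]
        have := intervalIntegral.integral_comp_sub_right (a := (n:ℝ)*τ) (b := u - τ)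
          (fun s => s ^ n) ((n:ℝ)*τ)
        rw [this]
        simp [integral_pow]
      · have hmem : s ∈ Icc ((n:ℝ)*τ) (u-τ) := by
          rwa [uIcc_of_le hnu] at hs
        rw [dterm, if_pos hmem.1]
        ring
    have hind : ((n:ℝ)+1) * τ ≤ u := hc
    rw [hsplit, h1, h2, dterm, if_pos (by push_cast; linarith)]
    push_cast
    rw [Nat.factorial_succ]
    push_cast
    have hfac : (0:ℝ) < (Nat.factorial n : ℝ) := by exact_mod_cast Nat.factorial_pos n
    field_simp
    ring
  · -- vanishing case
    have hz : dterm μ τ (n+1) u = 0 := by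
      rw [dterm, if_neg (by push_cast; push_cast at hc; exact hc), mul_zero]
    rw [hz]
    rcases le_or_gt 0 (u - τ) with h | h
    · rw [integral_of_le h, integral_Ioc_eq_integral_Ioo,
        setIntegral_congr_fun measurableSet_Ioo (g := fun _ => (0:ℝ)) (fun s hs => ?_)]
      · simp
      · have : s < (n:ℝ)*τ := by
          push_neg at hc
          calc s < u - τ := hs.2
          _ < (n:ℝ)*τ := by nlinarith
        simp [dterm, not_le.2 this]
    · rw [intervalIntegral.integral_symm, integral_of_le h.le, integral_Ioc_eq_integral_Ioo,
        setIntegral_congr_fun measurableSet_Ioo (g := fun _ => (0:ℝ)) (fun s hs => ?_)]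
      · simp
      · have : s < (n:ℝ)*τ := lt_of_lt_of_le hs.2 (by positivity)
        simp [dterm, not_le.2 this]

lemma dexp_key {μ τ : ℝ} (hμ : 0 ≤ μ) (hτ : 0 < τ) {u : ℝ} (hu : 0 ≤ u) :
    dexp μ τ u = 1 - μ * ∫ s in (0:ℝ)..(u - τ), dexp μ τ s := by
  obtain ⟨N, hN⟩ := exists_nat_gt (u / τ)
  have hNτ : u < N * τ := by
    have := (div_lt_iff₀ hτ).1 hN; linarith
  have hN1 : u < ((N+1 : ℕ) : ℝ) * τ := by push_cast; nlinarith
  rw [dexp_eq_sum hτ (N+1) u hN1, Finset.sum_range_succ']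
  have h0 : dterm μ τ 0 u = 1 := by simp [dterm, hu]
  rw [h0]
  have hsum : ∑ n ∈ Finset.range N, dterm μ τ (n+1) u
      = -μ * ∫ s in (0:ℝ)..(u - τ), ∑ n ∈ Finset.range N, dterm μ τ n s := by
    rw [intervalIntegral.integral_finset_sum (fun n _ => dterm_intervalIntegrable hμ hτ n _ _),
      Finset.mul_sum]
    exact Finset.sum_congr rfl fun n _ => integral_dterm_succ hμ hτ n hu
  have hcong : (∫ s in (0:ℝ)..(u - τ), ∑ n ∈ Finset.range N, dterm μ τ n s)
      = ∫ s in (0:ℝ)..(u - τ), dexp μ τ s := by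
    apply integral_congr
    intro s hs
    have hsN : s < N * τ := by
      rcases le_total 0 (u - τ) with h | h
      · rw [uIcc_of_le h] at hs; have := hs.2; nlinarith [hs.2]
      · rw [uIcc_of_ge h] at hs; have := hs.2; nlinarith [hs.2, hτ]
    exact (dexp_eq_sum hτ N s hsN).symm
  rw [hsum, hcong]
  ring

lemma dterm_continuousAt {μ τ : ℝ} (n : ℕ) {v : ℝ}
    (hv : v ≠ (n : ℝ) * τ ∨ 1 ≤ n) : ContinuousAt (dterm μ τ n) v := by
  rcases lt_trichotomy v ((n:ℝ)*τ) with h | h | h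
  · apply ContinuousAt.congr (f := fun _ => (0:ℝ)) continuousAt_const
    filter_upwards [Iio_mem_nhds h] with u hu
    simp [dterm, not_le.2 (mem_Iio.1 hu)]
  · have hn : n ≠ 0 := by
      rcases hv with h' | h'
      · exact absurd h h'
      · omega
    subst h
    have hval : dterm μ τ n ((n:ℝ)*τ) = 0 := by simp [dterm, zero_pow hn]
    rw [ContinuousAt, hval]
    apply squeeze_zero_norm (a := fun u => |μ|^n / (Nat.factorial n) * |u - (n:ℝ)*τ|^n)
    · intro u
      have hind : |(if (n:ℝ) * τ ≤ u then (1:ℝ) else 0)| ≤ 1 := by split_ifs <;> simp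
      calc ‖dterm μ τ n u‖
          = |(-μ)^n * (u - n*τ)^n / (Nat.factorial n)| * |(if (n:ℝ)*τ ≤ u then (1:ℝ) else 0)| := by
            rw [dterm, Real.norm_eq_abs, abs_mul]
        _ ≤ |(-μ)^n * (u - n*τ)^n / (Nat.factorial n)| * 1 := by
            exact mul_le_mul_of_nonneg_left hind (abs_nonneg _)
        _ = |μ|^n / (Nat.factorial n) * |u - (n:ℝ)*τ|^n := by
            rw [mul_one, abs_div, abs_mul, abs_pow (u - n*τ), abs_pow (-μ), abs_neg,
              abs_of_nonneg (show (0:ℝ) ≤ (Nat.factorial n : ℝ) by positivity)]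
            ring
    · have hc : Continuous fun u => |μ|^n / (Nat.factorial n : ℝ) * |u - (n:ℝ)*τ|^n :=
        continuous_const.mul (((continuous_id.sub continuous_const).abs).pow n)
      have h0 : (fun u => |μ|^n / (Nat.factorial n : ℝ) * |u - (n:ℝ)*τ|^n) ((n:ℝ)*τ) = 0 := by
        simp [zero_pow hn]
      have ht := hc.tendsto ((n:ℝ)*τ)
      simp only [sub_self, abs_zero, zero_pow hn, mul_zero] at ht
      exact ht
  · have hcont : ContinuousAt (fun u => (-μ)^n * (u - (n:ℝ)*τ)^n / (Nat.factorial n : ℝ)) v :=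
      ((continuous_const.mul ((continuous_id.sub continuous_const).pow n)).div_const
        _).continuousAt
    apply hcont.congr
    filter_upwards [Ioi_mem_nhds h] with u hu
    simp [dterm, le_of_lt (mem_Ioi.1 hu)]

lemma dexp_continuousAt {μ τ : ℝ} (hτ : 0 < τ) {v : ℝ} (hv : v ≠ 0) :
    ContinuousAt (dexp μ τ) v := by
  obtain ⟨N, hN⟩ := exists_nat_gt (v / τ)
  have hNτ : v < N * τ := by
    have := (div_lt_iff₀ hτ).1 hN; linarith
  apply ContinuousAt.congr (f := fun u => ∑ n ∈ Finset.range N, dterm μ τ n u)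
  · refine tendsto_finset_sum _ fun n _ => dterm_continuousAt n ?_
    rcases Nat.eq_zero_or_pos n with rfl | hn
    · left; simpa using hv
    · right; exact hn
  · filter_upwards [Iio_mem_nhds hNτ] with u hu
    exact (dexp_eq_sum hτ N u hu).symm

noncomputable def sig (Q : ℝ → ℝ) (μ τ : ℝ) : ℝ → ℝ := fun x =>
  if x < 0 then 0 else ∫ t₀ in (0:ℝ)..x, Q t₀ * dexp μ τ (x - t₀)

section SigLemmas

variable {Q : ℝ → ℝ} {μ τ : ℝ} (hμ : 0 < μ) (hτ : 0 < τ) (hQ : ContinuousOn Q (Ici 0))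

include hμ hτ hQ

-- (a) integrability of the basic integrand
lemma QPsi_int (c a b : ℝ) (ha : 0 ≤ a) (hb : 0 ≤ b) :
    IntervalIntegrable (fun t₀ => Q t₀ * dexp μ τ (c - t₀)) volume a b := by
  rw [intervalIntegrable_iff]
  have hsub : Set.uIoc a b ⊆ Icc 0 (max a b) := fun u hu =>
    ⟨le_trans (le_min ha hb) (le_of_lt hu.1), hu.2⟩
  obtain ⟨Cq, hCq⟩ := (isCompact_Icc (a := (0:ℝ)) (b := max a b)).exists_bound_of_continuousOn
    (hQ.mono (fun u hu => hu.1))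
  obtain ⟨Cd, hCd0, hCd⟩ := dexp_abs_le hμ.le hτ c
  refine Integrable.mono' (g := fun _ => Cq * Cd)
    (integrableOn_const measure_Ioc_lt_top.ne) ?_ ?_
  · exact ((hQ.mono (fun u hu => (hsub hu).1)).aestronglyMeasurable measurableSet_uIoc).mul
      (((measurable_dexp μ τ hτ).comp (measurable_const.sub measurable_id)).aestronglyMeasurable.restrict)
  · rw [ae_restrict_iff' measurableSet_uIoc]
    filter_upwards with u hu
    have h1 : |Q u| ≤ Cq := hCq u (hsub hu)
    have h2 : |dexp μ τ (c - u)| ≤ Cd := hCd _ (by have := (hsub hu).1; linarith)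
    calc ‖Q u * dexp μ τ (c - u)‖ = |Q u| * |dexp μ τ (c - u)| := by
          rw [Real.norm_eq_abs, abs_mul]
      _ ≤ Cq * Cd := mul_le_mul h1 h2 (abs_nonneg _) ((abs_nonneg _).trans h1)

-- (b) fixed-upper-limit representation
lemma sig_rep {c y : ℝ} (hy : 0 ≤ y) (hyc : y ≤ c) :
    sig Q μ τ y = ∫ t₀ in (0:ℝ)..c, Q t₀ * dexp μ τ (y - t₀) := by
  have hc : 0 ≤ c := hy.trans hyc
  have htail : (∫ t₀ in y..c, Q t₀ * dexp μ τ (y - t₀)) = 0 := by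
    rw [integral_of_le hyc, integral_Ioc_eq_integral_Ioo,
      setIntegral_congr_fun measurableSet_Ioo (g := fun _ => (0:ℝ))
      (fun t₀ ht₀ => by rw [dexp_neg hτ (by linarith [ht₀.1]), mul_zero])]
    simp
  rw [sig, if_neg (not_lt.2 hy),
    ← integral_add_adjacent_intervals (QPsi_int hμ hτ hQ y 0 y le_rfl hy)
      (QPsi_int hμ hτ hQ y y c hy hc), htail, add_zero]

-- (c) continuity of the fixed-limit parametric integral
lemma m_cont {c : ℝ} (hc : 0 ≤ c) :
    Continuous fun y => ∫ t₀ in (0:ℝ)..c, Q t₀ * dexp μ τ (y - t₀) := by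
  rw [continuous_iff_continuousAt]
  intro y₀
  have hrw : ∀ y : ℝ, (∫ t₀ in (0:ℝ)..c, Q t₀ * dexp μ τ (y - t₀))
      = ∫ t₀ in Ioc (0:ℝ) c, Q t₀ * dexp μ τ (y - t₀) := fun y => integral_of_le hc
  simp only [hrw]
  obtain ⟨Cq, hCq⟩ := (isCompact_Icc (a := (0:ℝ)) (b := c)).exists_bound_of_continuousOn
    (hQ.mono (fun u hu => hu.1))
  have hCq0 : 0 ≤ Cq := le_trans (norm_nonneg _) (hCq 0 ⟨le_rfl, hc⟩)
  obtain ⟨Cd, hCd0, hCd⟩ := dexp_abs_le hμ.le hτ (|y₀| + 1)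
  apply continuousAt_of_dominated (bound := fun _ => Cq * Cd)
  · filter_upwards with y
    exact ((hQ.mono (fun u hu => le_of_lt hu.1)).aestronglyMeasurable measurableSet_Ioc).mul
      (((measurable_dexp μ τ hτ).comp (measurable_const.sub measurable_id)).aestronglyMeasurable.restrict)
  · filter_upwards [Metric.ball_mem_nhds y₀ one_pos] with y hy
    rw [ae_restrict_iff' measurableSet_Ioc]
    filter_upwards with t₀ ht₀
    have h1 : |Q t₀| ≤ Cq := hCq t₀ ⟨ht₀.1.le, ht₀.2⟩
    have hyb : y - t₀ ≤ |y₀| + 1 := by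
      have : |y - y₀| < 1 := by simpa [Real.dist_eq] using hy
      have h2 := abs_lt.1 this
      have h3 := neg_abs_le y₀
      have h4 := le_abs_self y₀
      linarith [ht₀.1]
    have h2 : |dexp μ τ (y - t₀)| ≤ Cd := hCd _ hyb
    calc ‖Q t₀ * dexp μ τ (y - t₀)‖ = |Q t₀| * |dexp μ τ (y - t₀)| := by
          rw [Real.norm_eq_abs, abs_mul]
      _ ≤ Cq * Cd := mul_le_mul h1 h2 (abs_nonneg _) hCq0
  · exact integrableOn_const measure_Ioc_lt_top.ne
  · have hne : ∀ᵐ t₀ ∂(volume.restrict (Ioc (0:ℝ) c)), t₀ ≠ y₀ := by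
      apply ae_restrict_of_ae
      rw [MeasureTheory.ae_iff]
      simpa using measure_singleton y₀
    filter_upwards [hne] with t₀ ht₀
    refine continuousAt_const.mul ?_
    exact ContinuousAt.comp (x := y₀) (g := dexp μ τ) (f := fun y => y - t₀)
      (dexp_continuousAt hτ (sub_ne_zero.2 (Ne.symm ht₀)))
      ((continuous_sub_right t₀).continuousAt)

-- (d) pointwise rep of the shifted sig as a set integral
lemma sig_shift_rep {c : ℝ} (hc : 0 ≤ c) {s : ℝ} (hsc : s - τ ≤ c) :
    sig Q μ τ (s - τ) = ∫ t₀ in Ioc (0:ℝ) c, Q t₀ * dexp μ τ (s - τ - t₀) := by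
  rcases lt_or_ge (s - τ) 0 with h | h
  · rw [sig, if_pos h,
      setIntegral_congr_fun measurableSet_Ioc (g := fun _ => (0:ℝ))
      (fun t₀ ht₀ => by rw [dexp_neg hτ (by linarith [ht₀.1]), mul_zero])]
    simp
  · rw [sig_rep hμ hτ hQ h hsc, integral_of_le hc]

-- helper : integral of dexp over nonpositive interval
lemma integral_dexp_nonpos {a : ℝ} (ha : a ≤ 0) : (∫ s in a..(0:ℝ), dexp μ τ s) = 0 := by
  rw [integral_of_le ha, integral_Ioc_eq_integral_Ioo,
    setIntegral_congr_fun measurableSet_Ioo (g := fun _ => (0:ℝ))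
    (fun s hs => dexp_neg hτ hs.2)]
  simp

-- (e) Fubini
lemma sig_fubini {x : ℝ} (hx : 0 ≤ x) :
    (∫ s in (0:ℝ)..x, sig Q μ τ (s - τ))
      = ∫ t₀ in (0:ℝ)..x, Q t₀ * ∫ v in (0:ℝ)..(x - τ - t₀), dexp μ τ v := by
  have hCd := dexp_abs_le hμ.le hτ x
  obtain ⟨Cd, hCd0, hCd⟩ := hCd
  obtain ⟨Cq, hCq⟩ := (isCompact_Icc (a := (0:ℝ)) (b := x)).exists_bound_of_continuousOn
    (hQ.mono (fun u hu => hu.1))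
  have hCq0 : 0 ≤ Cq := le_trans (norm_nonneg _) (hCq 0 ⟨le_rfl, hx⟩)
  rw [integral_of_le hx, integral_of_le hx]
  rw [setIntegral_congr_fun measurableSet_Ioc
    (g := fun s => ∫ t₀ in Ioc (0:ℝ) x, Q t₀ * dexp μ τ (s - τ - t₀))
    (fun s hs => sig_shift_rep hμ hτ hQ hx (by linarith [hs.2, hτ]))]
  have hswap := MeasureTheory.integral_integral_swap
    (f := fun s t₀ => Q t₀ * dexp μ τ (s - τ - t₀))
    (μ := volume.restrict (Ioc (0:ℝ) x)) (ν := volume.restrict (Ioc (0:ℝ) x)) ?_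
  · rw [hswap]
    apply setIntegral_congr_fun measurableSet_Ioc
    intro t₀ ht₀
    dsimp only
    rw [MeasureTheory.integral_const_mul]
    congr 1
    have h1 : (∫ s in Ioc (0:ℝ) x, dexp μ τ (s - τ - t₀))
        = ∫ s in (0:ℝ)..x, dexp μ τ (s - (τ + t₀)) := by
      rw [integral_of_le hx]
      congr 1 with s
      rw [sub_sub]
    rw [h1, intervalIntegral.integral_comp_sub_right (dexp μ τ) (τ + t₀)]
    have h2 : (0:ℝ) - (τ + t₀) ≤ 0 := by linarith [ht₀.1]
    rw [← integral_add_adjacent_intervals (b := (0:ℝ))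
      (dexp_intervalIntegrable hμ.le hτ _ _) (dexp_intervalIntegrable hμ.le hτ _ _),
      integral_dexp_nonpos hμ hτ hQ h2, zero_add]
    congr 1
    ring
  · -- integrability on the product
    have hprod : (volume.restrict (Ioc (0:ℝ) x)).prod (volume.restrict (Ioc (0:ℝ) x))
        = (volume.prod volume).restrict ((Ioc (0:ℝ) x) ×ˢ (Ioc (0:ℝ) x)) :=
      Measure.prod_restrict _ _
    refine Integrable.mono' (g := fun _ => Cq * Cd) ?_ ?_ ?_
    · rw [integrable_const_iff]
      refine Or.inr ?_
      rw [hprod]; constructor; rw [Measure.restrict_apply_univ, Measure.prod_prod]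
      exact ENNReal.mul_lt_top measure_Ioc_lt_top measure_Ioc_lt_top
    · refine AEStronglyMeasurable.mul ?_ ?_
      · exact ((hQ.mono (fun u hu => le_of_lt hu.1)).aestronglyMeasurable measurableSet_Ioc).comp_snd
      · exact ((measurable_dexp μ τ hτ).comp
          (((measurable_fst.sub measurable_const).sub measurable_snd))).aestronglyMeasurable
    · rw [hprod, ae_restrict_iff' (measurableSet_Ioc.prod measurableSet_Ioc)]
      filter_upwards with z hz
      have hz1 : z.1 ∈ Ioc (0:ℝ) x := hz.1
      have hz2 : z.2 ∈ Ioc (0:ℝ) x := hz.2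
      have h1 : |Q z.2| ≤ Cq := hCq _ ⟨hz2.1.le, hz2.2⟩
      have h2 : |dexp μ τ (z.1 - τ - z.2)| ≤ Cd := hCd _ (by linarith [hz1.2, hz2.1, hτ])
      calc ‖Function.uncurry (fun s t₀ => Q t₀ * dexp μ τ (s - τ - t₀)) z‖
          = |Q z.2| * |dexp μ τ (z.1 - τ - z.2)| := by
            rw [Function.uncurry, Real.norm_eq_abs, abs_mul]
        _ ≤ Cq * Cd := mul_le_mul h1 h2 (abs_nonneg _) hCq0

-- (g) interval integrability of the shifted sig
lemma sig_shift_int {x : ℝ} (hx : 0 ≤ x) :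
    IntervalIntegrable (fun s => sig Q μ τ (s - τ)) volume 0 x := by
  rw [intervalIntegrable_iff, uIoc_of_le hx]
  have hm : Continuous fun s => ∫ t₀ in (0:ℝ)..x, Q t₀ * dexp μ τ ((s - τ) - t₀) :=
    (m_cont hμ hτ hQ hx).comp (continuous_sub_right τ)
  have h1 : IntegrableOn
      ((Ici τ).indicator (fun s => ∫ t₀ in (0:ℝ)..x, Q t₀ * dexp μ τ ((s - τ) - t₀)))
      (Ioc 0 x) volume :=
    (hm.integrableOn_Ioc).indicator measurableSet_Ici
  refine h1.congr_fun (fun s hs => ?_) measurableSet_Ioc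
  by_cases hsτ : τ ≤ s
  · rw [indicator_of_mem (mem_Ici.2 hsτ)]
    exact (sig_rep hμ hτ hQ (by linarith) (by linarith [hs.2, hτ.le])).symm
  · rw [indicator_of_notMem (fun hc => hsτ (mem_Ici.1 hc)), sig, if_pos (by push_neg at hsτ; linarith)]

-- (f) the integral equation
lemma sig_eqn {x : ℝ} (hx : 0 ≤ x) :
    sig Q μ τ x = ∫ s in (0:ℝ)..x, (Q s - μ * sig Q μ τ (s - τ)) := by
  have hQi : IntervalIntegrable Q volume 0 x :=
    (hQ.mono (by rw [uIcc_of_le hx]; exact fun u hu => hu.1)).intervalIntegrable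
  have hGcont : Continuous fun w => ∫ v in (0:ℝ)..w, dexp μ τ v :=
    intervalIntegral.continuous_primitive (fun a b => dexp_intervalIntegrable hμ.le hτ a b) 0
  have hQGi : IntervalIntegrable
      (fun t₀ => Q t₀ * ∫ v in (0:ℝ)..(x - τ - t₀), dexp μ τ v) volume 0 x := by
    apply ContinuousOn.intervalIntegrable
    apply ContinuousOn.mul (hQ.mono (by rw [uIcc_of_le hx]; exact fun u hu => hu.1))
    exact (hGcont.comp (continuous_const.sub continuous_id)).continuousOn
  have hshift_i : IntervalIntegrable (fun s => sig Q μ τ (s - τ)) volume 0 x :=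
    sig_shift_int hμ hτ hQ hx
  have step1 : sig Q μ τ x
      = ∫ t₀ in (0:ℝ)..x, (Q t₀ - μ * (Q t₀ * ∫ v in (0:ℝ)..(x - τ - t₀), dexp μ τ v)) := by
    rw [sig, if_neg (not_lt.2 hx)]
    apply integral_congr
    intro t₀ ht₀
    rw [uIcc_of_le hx] at ht₀
    have h1 : 0 ≤ x - t₀ := by linarith [ht₀.2]
    dsimp only
    rw [dexp_key hμ.le hτ h1]
    have h2 : x - t₀ - τ = x - τ - t₀ := by ring
    rw [h2]; ring
  rw [step1, integral_sub hQi (hQGi.const_mul μ), intervalIntegral.integral_const_mul,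
    ← sig_fubini hμ hτ hQ hx,
    integral_sub hQi (hshift_i.const_mul μ), intervalIntegral.integral_const_mul]

-- (h) continuity of sig away from 0
lemma sig_contAt {y₀ : ℝ} (hy : y₀ ≠ 0) : ContinuousAt (sig Q μ τ) y₀ := by
  rcases lt_or_gt_of_ne hy with h | h
  · apply ContinuousAt.congr (f := fun _ => (0:ℝ)) continuousAt_const
    filter_upwards [Iio_mem_nhds h] with u hu
    rw [sig, if_pos (mem_Iio.1 hu)]
  · apply ContinuousAt.congr
      (f := fun y => ∫ t₀ in (0:ℝ)..(y₀+1), Q t₀ * dexp μ τ (y - t₀))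
      ((m_cont hμ hτ hQ (by linarith)).continuousAt)
    filter_upwards [Ioo_mem_nhds h (lt_add_one y₀)] with y hy'
    exact (sig_rep hμ hτ hQ hy'.1.le hy'.2.le).symm

-- (i) the delay differential equation for sig
lemma sig_hasDerivAt {t : ℝ} (ht : 0 < t) (hne : t ≠ τ) :
    HasDerivAt (sig Q μ τ) (Q t - μ * sig Q μ τ (t - τ)) t := by
  have hQi : ∀ x : ℝ, 0 ≤ x → IntervalIntegrable Q volume 0 x := fun x hx =>
    (hQ.mono (by rw [uIcc_of_le hx]; exact fun u hu => hu.1)).intervalIntegrable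
  have hΦi : IntervalIntegrable (fun s => Q s - μ * sig Q μ τ (s - τ)) volume 0 t :=
    (hQi t ht.le).sub ((sig_shift_int hμ hτ hQ ht.le).const_mul μ)
  have hmeas : StronglyMeasurableAtFilter (fun s => Q s - μ * sig Q μ τ (s - τ))
      (nhds t) volume := by
    refine ⟨Ioo 0 (t+1), Ioo_mem_nhds ht (lt_add_one t), ?_⟩
    have h1 : AEStronglyMeasurable Q (volume.restrict (Ioo 0 (t+1))) :=
      (hQ.mono (fun u hu => hu.1.le)).aestronglyMeasurable measurableSet_Ioo
    have hm : Continuous fun s => ∫ t₀ in (0:ℝ)..(t+1), Q t₀ * dexp μ τ ((s - τ) - t₀) :=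
      (m_cont hμ hτ hQ (by linarith)).comp (continuous_sub_right τ)
    have h2 : AEStronglyMeasurable (fun s => sig Q μ τ (s - τ))
        (volume.restrict (Ioo 0 (t+1))) := by
      refine AEStronglyMeasurable.congr
        ((hm.aestronglyMeasurable.indicator (measurableSet_Ici (a := τ))).restrict) ?_
      filter_upwards [ae_restrict_mem measurableSet_Ioo] with s hs
      by_cases hsτ : τ ≤ s
      · rw [indicator_of_mem (mem_Ici.2 hsτ)]
        exact (sig_rep hμ hτ hQ (by linarith) (by linarith [hs.2, hτ.le])).symm
      · rw [indicator_of_notMem (fun hc => hsτ (mem_Ici.1 hc)), sig, if_pos (by push_neg at hsτ; linarith)]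
    exact h1.sub (h2.const_mul μ)
  have hcont : ContinuousAt (fun s => Q s - μ * sig Q μ τ (s - τ)) t := by
    have hQc : ContinuousAt Q t :=
      hQ.continuousAt (Filter.mem_of_superset (Ioi_mem_nhds ht) Ioi_subset_Ici_self)
    have hsc : ContinuousAt (fun s => sig Q μ τ (s - τ)) t :=
      ContinuousAt.comp (x := t) (g := sig Q μ τ) (f := fun s => s - τ)
        (sig_contAt hμ hτ hQ (sub_ne_zero.2 hne)) ((continuous_sub_right τ).continuousAt)
    exact hQc.sub (continuousAt_const.mul hsc)
  have hP := intervalIntegral.integral_hasDerivAt_right hΦi hmeas hcont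
  refine hP.congr_of_eventuallyEq ?_
  filter_upwards [Ioi_mem_nhds ht] with x hx
  exact sig_eqn hμ hτ hQ (le_of_lt hx)

end SigLemmas

/-- The compartment content `ρ(t) = ∫₀ᵗ q(t₀) e^{-ω(t-t₀)} Ψ(t-t₀) dt₀` (with
`Ψ = dexp(-μ·; -μτ)` and `ρ(t) = 0` for `t < 0`) satisfies the delay differential
equation `ρ'(t) = q(t) - ω ρ(t) - μ e^{-ωτ} ρ(t-τ)` for `t > 0` away from the integer
multiples of `τ`. -/
theorem compartment_delay_equation (q : ℝ → ℝ) (ω μ τ : ℝ) (hω : 0 ≤ ω) (hμ : 0 < μ)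
    (hτ : 0 < τ) (hμτ : μ * τ < (Real.exp 1)⁻¹) (hq : ContinuousOn q (Ici 0))
    (ρ : ℝ → ℝ)
    (hρ : ρ = fun t => if t < 0 then 0
        else ∫ t₀ in (0 : ℝ)..t, q t₀ * Real.exp (-ω * (t - t₀)) * dexp μ τ (t - t₀))
    (t : ℝ) (ht : 0 < t) (hmult : ∀ n : ℕ, t ≠ n * τ) :
    HasDerivAt ρ (q t - ω * ρ t - μ * Real.exp (-ω * τ) * ρ (t - τ)) t := by
  set Q : ℝ → ℝ := fun s => Real.exp (ω * s) * q s with hQdef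
  have hQ : ContinuousOn Q (Ici 0) :=
    ((Real.continuous_exp.comp (continuous_const.mul continuous_id)).continuousOn).mul hq
  have hρσ : ∀ x : ℝ, ρ x = Real.exp (-ω * x) * sig Q μ τ x := by
    intro x
    simp only [hρ, sig]
    by_cases hx : x < 0
    · simp [hx]
    · rw [if_neg hx, if_neg hx, ← intervalIntegral.integral_const_mul]
      apply integral_congr
      intro t₀ _
      have : Real.exp (-ω * x) * Real.exp (ω * t₀) = Real.exp (-ω * (x - t₀)) := by
        rw [← Real.exp_add]; ring_nf
      calc q t₀ * Real.exp (-ω * (x - t₀)) * dexp μ τ (x - t₀)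
          = (Real.exp (-ω * x) * Real.exp (ω * t₀)) * q t₀ * dexp μ τ (x - t₀) := by
            rw [this]; ring
        _ = Real.exp (-ω * x) * (Q t₀ * dexp μ τ (x - t₀)) := by rw [hQdef]; ring
  have hne : t ≠ τ := by simpa using hmult 1
  have hsd := sig_hasDerivAt hμ hτ hQ ht hne
  have hE : HasDerivAt (fun x : ℝ => Real.exp (-ω * x)) (Real.exp (-ω * t) * -ω) t := by
    simpa using ((hasDerivAt_id t).const_mul (-ω)).exp
  have hprod := hE.mul hsd
  have hfun : ρ = fun x => Real.exp (-ω * x) * sig Q μ τ x := funext hρσ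
  have hkey : HasDerivAt ρ (Real.exp (-ω * t) * -ω * sig Q μ τ t
      + Real.exp (-ω * t) * (Q t - μ * sig Q μ τ (t - τ))) t := by
    rw [hfun]; exact hprod
  convert hkey using 1
  rw [hρσ t, hρσ (t - τ)]
  have e1 : Real.exp (-ω * t) * Real.exp (ω * t) = 1 := by
    rw [← Real.exp_add]; ring_nf; exact Real.exp_zero
  have e2 : Real.exp (-ω * τ) * Real.exp (-ω * (t - τ)) = Real.exp (-ω * t) := by
    rw [← Real.exp_add]; ring_nf
  have hQt : Q t = Real.exp (ω * t) * q t := rfl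
  -- goal: q t - ω * (exp(-ωt) * sig t) - μ * exp(-ωτ) * (exp(-ω(t-τ)) * sig (t-τ))
  --     = exp(-ωt) * -ω * sig t + exp(-ωt) * (Q t - μ * sig (t-τ))
  rw [hQt]
  linear_combination (-(q t)) * e1 + (-(μ * sig Q μ τ (t - τ))) * e2
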